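/- With ρ as above and F/2^w ≤ 4r, r ≥ 2: (1 - 1/r)·e^{-4/(r-1)} ≤ ρ ≤ e^{4/(r-1)}. In particular, if r ≥ 1 + 8/ε² (so that 4/(r-1) ≤ ε²/2) and r ≥ 2/ε², then 1 - ε² ≤ ρ ≤ 1 + ε² for 0 < ε < 1. -/

import Mathlib

set_option maxHeartbeats 1000000

/-- Bounds on the correction factor
`ρ = (1-1/r)^{1-F/2^w}·(1-1/(r·2^w))^{F-1}` when `F > 0`, `F/2^w ≤ 4r`, `r ≥ 2`:
`(1-1/r)·e^{-4/(r-1)} ≤ ρ ≤ e^{4/(r-1)}`; and if moreover `r ≥ 1 + 8/ε²` and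
`r ≥ 2/ε²` for `0 < ε < 1`, then `1 - ε² ≤ ρ ≤ 1 + ε²`. -/
theorem stmt_19 (r F ε : ℝ) (w : ℕ) (hw : 1 ≤ w) (hr : 2 ≤ r) (hF : 0 < F)
    (hF4r : F / 2 ^ w ≤ 4 * r) (hε0 : 0 < ε) (hε1 : ε < 1)
    (hr1 : 1 + 8 / ε ^ 2 ≤ r) (hr2 : 2 / ε ^ 2 ≤ r) :
    (1 - 1 / r) * Real.exp (-(4 / (r - 1))) ≤
        (1 - 1 / r) ^ (1 - F / 2 ^ w) * (1 - 1 / (r * 2 ^ w)) ^ (F - 1) ∧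
      (1 - 1 / r) ^ (1 - F / 2 ^ w) * (1 - 1 / (r * 2 ^ w)) ^ (F - 1) ≤
        Real.exp (4 / (r - 1)) ∧
      1 - ε ^ 2 ≤
        (1 - 1 / r) ^ (1 - F / 2 ^ w) * (1 - 1 / (r * 2 ^ w)) ^ (F - 1) ∧
      (1 - 1 / r) ^ (1 - F / 2 ^ w) * (1 - 1 / (r * 2 ^ w)) ^ (F - 1) ≤
        1 + ε ^ 2 := by
  set s : ℝ := (2:ℝ) ^ w with hs_def
  have hs2 : (2:ℝ) ≤ s := by
    calc (2:ℝ) = 2 ^ 1 := (pow_one 2).symm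
    _ ≤ s := pow_le_pow_right₀ (by norm_num) hw
  have hs0 : (0:ℝ) < s := by linarith
  have hr0 : (0:ℝ) < r := by linarith
  have hr1' : (0:ℝ) < r - 1 := by linarith
  have hrs0 : (0:ℝ) < r * s := by positivity
  have hrs1 : (1:ℝ) < r * s := by nlinarith
  have hrs1' : (0:ℝ) < r * s - 1 := by linarith
  have hA0 : (0:ℝ) < 1 - 1/r := by
    have : 1/r ≤ 1/2 := by
      rw [div_le_div_iff₀ hr0 (by norm_num)]; linarith
    linarith
  have hB0 : (0:ℝ) < 1 - 1/(r*s) := by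
    have : 1/(r*s) < 1 := by rw [div_lt_one hrs0]; exact hrs1
    linarith
  set la := Real.log (1 - 1/r) with hla_def
  set lb := Real.log (1 - 1/(r*s)) with hlb_def
  -- log bounds
  have h1 : -(1/(r-1)) ≤ la := by
    have h := Real.one_sub_inv_le_log_of_pos hA0
    have e : 1 - (1 - 1/r)⁻¹ = -(1/(r-1)) := by
      field_simp
      ring
    linarith [e ▸ h]
  have h2 : la ≤ -(1/r) := by
    have h := Real.log_le_sub_one_of_pos hA0
    linarith
  have h3 : -(1/(r*s-1)) ≤ lb := by
    have h := Real.one_sub_inv_le_log_of_pos hB0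
    have e : 1 - (1 - 1/(r*s))⁻¹ = -(1/(r*s-1)) := by
      field_simp
      ring
    linarith [e ▸ h]
  have h4 : lb ≤ -(1/(r*s)) := by
    have h := Real.log_le_sub_one_of_pos hB0
    linarith
  have hFs : F ≤ 4 * r * s := by
    rw [div_le_iff₀ hs0] at hF4r; linarith
  -- key log-level bounds
  have key_up : (1 - F/s) * la + (F - 1) * lb ≤ 4/(r-1) := by
    have hla : -(1/(r-1))/s ≤ la/s := by gcongr
    have e : -(1/(r*s)) - (-(1/(r-1))/s) = 1/(s*r*(r-1)) := by
      field_simp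
      ring
    have step_a : lb - la/s ≤ 1/(s*r*(r-1)) := by
      have : lb - la/s ≤ -(1/(r*s)) - (-(1/(r-1))/s) := by linarith
      linarith [e ▸ this]
    have step_b : F * (lb - la/s) ≤ 4/(r-1) := by
      have hc0 : (0:ℝ) ≤ 1/(s*r*(r-1)) := by positivity
      have h5 : F * (lb - la/s) ≤ (4*r*s) * (1/(s*r*(r-1))) := by
        calc F * (lb - la/s) ≤ F * (1/(s*r*(r-1))) :=
              mul_le_mul_of_nonneg_left step_a hF.le
          _ ≤ (4*r*s) * (1/(s*r*(r-1))) := mul_le_mul_of_nonneg_right hFs hc0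
      have e2 : (4*r*s) * (1/(s*r*(r-1))) = 4/(r-1) := by
        field_simp
      linarith [e2 ▸ h5]
    have step_c : la - lb ≤ 0 := by
      have : 1/(r*s-1) ≤ 1/r := by
        rw [div_le_div_iff₀ hrs1' hr0]
        nlinarith
      linarith
    have ering : (1 - F/s) * la + (F - 1) * lb = F * (lb - la/s) + (la - lb) := by
      ring
    linarith [ering ▸ (add_le_add step_b step_c)]
  have key_lo : la - 4/(r-1) ≤ (1 - F/s) * la + (F - 1) * lb := by
    have hla : la/s ≤ -(1/r)/s := by gcongr
    have e : -(1/(r*s-1)) - (-(1/r)/s) = -(1/(r*s*(r*s-1))) := by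
      field_simp
      ring
    have step_a : -(1/(r*s*(r*s-1))) ≤ lb - la/s := by
      have : -(1/(r*s-1)) - (-(1/r)/s) ≤ lb - la/s := by linarith
      linarith [e ▸ this]
    have step_b : -(4/(r-1)) ≤ F * (lb - la/s) := by
      have hc0 : -(1/(r*s*(r*s-1))) ≤ 0 := by
        have : (0:ℝ) ≤ 1/(r*s*(r*s-1)) := by positivity
        linarith
      have h5 : (4*r*s) * (-(1/(r*s*(r*s-1)))) ≤ F * (lb - la/s) := by
        calc (4*r*s) * (-(1/(r*s*(r*s-1)))) ≤ F * (-(1/(r*s*(r*s-1)))) :=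
              mul_le_mul_of_nonpos_right hFs hc0
          _ ≤ F * (lb - la/s) := mul_le_mul_of_nonneg_left step_a hF.le
      have e2 : (4*r*s) * (-(1/(r*s*(r*s-1)))) = -(4/(r*s-1)) := by
        field_simp
      have e3 : -(4/(r-1)) ≤ -(4/(r*s-1)) := by
        have : 4/(r*s-1) ≤ 4/(r-1) := by
          rw [div_le_div_iff₀ hrs1' hr1']
          nlinarith
        linarith
      linarith [e2 ▸ h5]
    have step_c : la ≤ la - lb := by
      have : (0:ℝ) < 1/(r*s) := by positivity
      linarith
    have ering : (1 - F/s) * la + (F - 1) * lb = F * (lb - la/s) + (la - lb) := by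
      ring
    linarith [ering ▸ (add_le_add step_b step_c)]
  -- rewrite rho as exp
  have hrho : (1 - 1/r) ^ (1 - F/s) * (1 - 1/(r*s)) ^ (F-1)
      = Real.exp ((1 - F/s) * la + (F - 1) * lb) := by
    rw [Real.rpow_def_of_pos hA0, Real.rpow_def_of_pos hB0, ← Real.exp_add]
    congr 1
    rw [hla_def, hlb_def]
    ring
  -- first two bounds
  have bound_lo : (1 - 1/r) * Real.exp (-(4/(r-1))) ≤
      (1 - 1/r) ^ (1 - F/s) * (1 - 1/(r*s)) ^ (F-1) := by
    rw [hrho]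
    have : (1 - 1/r) * Real.exp (-(4/(r-1))) = Real.exp (la - 4/(r-1)) := by
      conv_lhs => rw [← Real.exp_log hA0]
      rw [← Real.exp_add]
      congr 1
    rw [this]
    exact Real.exp_le_exp.mpr key_lo
  have bound_up' : (1 - 1/r) ^ (1 - F/s) * (1 - 1/(r*s)) ^ (F-1) ≤
      Real.exp (4/(r-1)) := by
    rw [hrho]
    exact Real.exp_le_exp.mpr key_up
  -- epsilon facts
  have hε2 : ε^2 ≤ 1 := by nlinarith
  have hε2' : (0:ℝ) < ε^2 := by positivity
  have hx : 4/(r-1) ≤ ε^2/2 := by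
    have h8 : 8 ≤ (r-1) * ε^2 := by
      have : 8/ε^2 ≤ r - 1 := by linarith
      rw [div_le_iff₀ hε2'] at this
      linarith [mul_comm (ε^2) (r-1)]
    rw [div_le_div_iff₀ hr1' (by norm_num : (0:ℝ) < 2)]
    nlinarith
  have hinvr : 1/r ≤ ε^2/2 := by
    have h2' : 2 ≤ r * ε^2 := by
      rw [div_le_iff₀ hε2'] at hr2
      linarith [mul_comm (ε^2) r]
    rw [div_le_div_iff₀ hr0 (by norm_num : (0:ℝ) < 2)]
    nlinarith
  -- epsilon lower bound
  have eps_lo : 1 - ε^2 ≤ (1 - 1/r) * Real.exp (-(4/(r-1))) := by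
    have hexp : 1 - ε^2/2 ≤ Real.exp (-(4/(r-1))) := by
      have := Real.add_one_le_exp (-(4/(r-1)))
      linarith
    have hfac : 1 - ε^2/2 ≤ 1 - 1/r := by linarith
    have hpos : (0:ℝ) ≤ 1 - ε^2/2 := by nlinarith
    have : (1 - ε^2/2) * (1 - ε^2/2) ≤ (1 - 1/r) * Real.exp (-(4/(r-1))) := by
      apply mul_le_mul hfac hexp hpos (by linarith)
    nlinarith [sq_nonneg (ε^2)]
  -- epsilon upper bound
  have eps_up : Real.exp (4/(r-1)) ≤ 1 + ε^2 := by
    have hmono : Real.exp (4/(r-1)) ≤ Real.exp (ε^2/2) := Real.exp_le_exp.mpr hx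
    set E := Real.exp (ε^2/2) with hE_def
    have hE0 : (0:ℝ) < E := Real.exp_pos _
    have hhalf : (0:ℝ) < 1 - ε^2/2 := by nlinarith
    have hinv : (1 - ε^2/2) * E ≤ 1 := by
      have h := Real.add_one_le_exp (-(ε^2/2))
      rw [Real.exp_neg, ← hE_def] at h
      have := mul_le_mul_of_nonneg_right (by linarith : 1 - ε^2/2 ≤ E⁻¹) hE0.le
      rwa [inv_mul_cancel₀ hE0.ne'] at this
    have h1' : E * (1 - ε^2/2) ≤ (1 + ε^2) * (1 - ε^2/2) := by
      nlinarith [mul_nonneg (sq_nonneg ε) (by linarith : (0:ℝ) ≤ 1 - ε^2)]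
    have := le_of_mul_le_mul_right h1' hhalf
    linarith
  refine ⟨bound_lo, bound_up', le_trans eps_lo bound_lo, le_trans bound_up' eps_up⟩
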